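/- Let U ⊆ ℂ^m be open and G : U × ℂⁿ → ℝ continuous such that for every x ∈ U the function G(x,·) is positive, convex, complex homogeneous, and strictly convex; let F be the dual metric. Then F is uniformly smooth on compacts: for every ε > 0 and every compact set K ⊆ U there exists δ > 0 such that for all x ∈ K and all ξ₁, ξ₂ ∈ ℂⁿ with F(x, ξ₂) ≤ F(x, ξ₁) = 1 and F(x, ξ₁ − ξ₂) < δ, one has F(x, ξ₁ + ξ₂) ≥ F(x, ξ₁) + F(x, ξ₂) − ε·F(x, ξ₁ − ξ₂). -/

import Mathlib

open Complex Filter Asymptotics Topology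

noncomputable section

/-- The ℂ-bilinear pairing `η(ξ) = ∑ i, η i * ξ i` on `ℂⁿ`. -/
def cpair {n : ℕ} (η ξ : Fin n → ℂ) : ℂ := ∑ i, η i * ξ i

/-- `G` is positive: `G η > 0` for every `η ≠ 0`. -/
def IsPositiveFn {n : ℕ} (G : (Fin n → ℂ) → ℝ) : Prop :=
  ∀ η : Fin n → ℂ, η ≠ 0 → 0 < G η

/-- `G` is complex homogeneous: `G (α • η) = |α| * G η`. -/
def IsComplexHomogeneous {n : ℕ} (G : (Fin n → ℂ) → ℝ) : Prop :=
  ∀ (α : ℂ) (η : Fin n → ℂ), G (α • η) = ‖α‖ * G η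

/-- `G` is convex (subadditive): `G (η₁ + η₂) ≤ G η₁ + G η₂`. -/
def IsConvexFn {n : ℕ} (G : (Fin n → ℂ) → ℝ) : Prop :=
  ∀ η₁ η₂ : Fin n → ℂ, G (η₁ + η₂) ≤ G η₁ + G η₂

/-- `G` is strictly convex: it is convex and `G (η₁ + η₂) < 2` whenever
`G η₁ = G η₂ = 1` and `η₁ ≠ η₂`. -/
def IsStrictlyConvexFn {n : ℕ} (G : (Fin n → ℂ) → ℝ) : Prop :=
  IsConvexFn G ∧
    ∀ η₁ η₂ : Fin n → ℂ, G η₁ = 1 → G η₂ = 1 → η₁ ≠ η₂ → G (η₁ + η₂) < 2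

/-- The dual norm `F ξ = sup {Re (η(ξ)) : G η = 1}`. -/
def dualNorm {n : ℕ} (G : (Fin n → ℂ) → ℝ) (ξ : Fin n → ℂ) : ℝ :=
  sSup {r : ℝ | ∃ η : Fin n → ℂ, G η = 1 ∧ r = (cpair η ξ).re}

/-- The dual metric `F (x, ξ) = sup {Re (η(ξ)) : G (x, η) = 1}` of a parametrized
family `G : U × ℂⁿ → ℝ`. -/
def dualMetric {m n : ℕ} (G : (Fin m → ℂ) × (Fin n → ℂ) → ℝ)
    (x : Fin m → ℂ) (ξ : Fin n → ℂ) : ℝ :=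
  dualNorm (fun η => G (x, η)) ξ

end

section
variable {n : ℕ}

lemma cpair_add_right (η ξ₁ ξ₂ : Fin n → ℂ) :
    cpair η (ξ₁ + ξ₂) = cpair η ξ₁ + cpair η ξ₂ := by
  simp [cpair, mul_add, Finset.sum_add_distrib]

lemma cpair_sub_right (η ξ₁ ξ₂ : Fin n → ℂ) :
    cpair η (ξ₁ - ξ₂) = cpair η ξ₁ - cpair η ξ₂ := by
  simp [cpair, mul_sub, Finset.sum_sub_distrib]

lemma cpair_sub_left (η η' ξ : Fin n → ℂ) :
    cpair (η - η') ξ = cpair η ξ - cpair η' ξ := by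
  simp [cpair, sub_mul, Finset.sum_sub_distrib]

lemma cpair_zero_left (ξ : Fin n → ℂ) : cpair (0 : Fin n → ℂ) ξ = 0 := by
  simp [cpair]

lemma real_smul_eq (r : ℝ) (η : Fin n → ℂ) : r • η = (r : ℂ) • η := by
  funext i; simp [Complex.real_smul]

lemma cpair_smul_left (r : ℝ) (η ξ : Fin n → ℂ) :
    cpair (r • η) ξ = (r : ℂ) * cpair η ξ := by
  simp [cpair, Finset.mul_sum, mul_assoc]

lemma cpair_smul_right (r : ℝ) (η ξ : Fin n → ℂ) :
    cpair η (r • ξ) = (r : ℂ) * cpair η ξ := by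
  simp [cpair, Finset.mul_sum]; ring_nf
  exact Finset.sum_congr rfl fun i _ => by ring

lemma re_cpair_le (η ξ : Fin n → ℂ) : (cpair η ξ).re ≤ n * ‖η‖ * ‖ξ‖ := by
  calc (cpair η ξ).re ≤ ‖cpair η ξ‖ := Complex.re_le_norm _
    _ ≤ ∑ i : Fin n, ‖η i * ξ i‖ := norm_sum_le _ _
    _ ≤ ∑ _i : Fin n, ‖η‖ * ‖ξ‖ := by
        refine Finset.sum_le_sum fun i _ => ?_
        rw [norm_mul]
        exact mul_le_mul (norm_le_pi_norm η i) (norm_le_pi_norm ξ i) (norm_nonneg _)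
          (norm_nonneg _)
    _ = n * ‖η‖ * ‖ξ‖ := by simp [mul_assoc]

lemma continuous_cpair : Continuous fun p : (Fin n → ℂ) × (Fin n → ℂ) => cpair p.1 p.2 := by
  unfold cpair
  exact continuous_finset_sum _ fun i _ =>
    ((continuous_apply i).comp continuous_fst).mul ((continuous_apply i).comp continuous_snd)
end

section dual
variable {n : ℕ} {Gx : (Fin n → ℂ) → ℝ} {c₁ C₁ : ℝ}

/-- the set defining the dual norm -/
def dnSet (Gx : (Fin n → ℂ) → ℝ) (ξ : Fin n → ℂ) : Set ℝ :=
  {r : ℝ | ∃ η : Fin n → ℂ, Gx η = 1 ∧ r = (cpair η ξ).re}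

lemma dualNorm_eq (ξ : Fin n → ℂ) : dualNorm Gx ξ = sSup (dnSet Gx ξ) := rfl

lemma dnSet_bddAbove (hc₁ : 0 < c₁) (hlow : ∀ η, c₁ * ‖η‖ ≤ Gx η) (ξ : Fin n → ℂ) :
    BddAbove (dnSet Gx ξ) := by
  refine ⟨n * c₁⁻¹ * ‖ξ‖, fun r hr => ?_⟩
  obtain ⟨η, hη1, rfl⟩ := hr
  have hη : ‖η‖ ≤ c₁⁻¹ := by
    refine le_of_mul_le_mul_left ?_ hc₁
    rw [mul_inv_cancel₀ hc₁.ne']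
    simpa [hη1] using hlow η
  calc (cpair η ξ).re ≤ n * ‖η‖ * ‖ξ‖ := re_cpair_le η ξ
    _ ≤ n * c₁⁻¹ * ‖ξ‖ := by
        gcongr

lemma dnSet_nonempty (hne : ∃ η, Gx η = 1) (ξ : Fin n → ℂ) : (dnSet Gx ξ).Nonempty := by
  obtain ⟨η, hη⟩ := hne
  exact ⟨(cpair η ξ).re, η, hη, rfl⟩

lemma le_dualNorm (hc₁ : 0 < c₁) (hlow : ∀ η, c₁ * ‖η‖ ≤ Gx η)
    {η : Fin n → ℂ} (hη : Gx η = 1) (ξ : Fin n → ℂ) :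
    (cpair η ξ).re ≤ dualNorm Gx ξ :=
  le_csSup (dnSet_bddAbove hc₁ hlow ξ) ⟨η, hη, rfl⟩

lemma dualNorm_le (hne : ∃ η, Gx η = 1) {ξ : Fin n → ℂ} {a : ℝ}
    (h : ∀ η, Gx η = 1 → (cpair η ξ).re ≤ a) : dualNorm Gx ξ ≤ a :=
  csSup_le (dnSet_nonempty hne ξ) (by rintro r ⟨η, hη, rfl⟩; exact h η hη)

lemma exists_maximizer (hcont : Continuous Gx) (hc₁ : 0 < c₁)
    (hlow : ∀ η, c₁ * ‖η‖ ≤ Gx η) (hne : ∃ η, Gx η = 1) (ξ : Fin n → ℂ) :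
    ∃ η, Gx η = 1 ∧ dualNorm Gx ξ = (cpair η ξ).re := by
  set A : Set (Fin n → ℂ) := {η | Gx η = 1} with hA
  have hclosed : IsClosed A := isClosed_eq hcont continuous_const
  have hsub : A ⊆ Metric.closedBall 0 c₁⁻¹ := by
    intro η hη
    rw [Metric.mem_closedBall, dist_zero_right]
    refine le_of_mul_le_mul_left ?_ hc₁
    rw [mul_inv_cancel₀ hc₁.ne']
    simpa [hη.out] using hlow η
  have hAcomp : IsCompact A :=
    (isCompact_closedBall (0 : Fin n → ℂ) c₁⁻¹).of_isClosed_subset hclosed hsub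
  have hAne : A.Nonempty := hne
  set f : (Fin n → ℂ) → ℝ := fun η => (cpair η ξ).re with hf
  have hfc : Continuous f :=
    Complex.continuous_re.comp (continuous_cpair.comp (continuous_id.prodMk continuous_const))
  have himg : dnSet Gx ξ = f '' A := by
    ext r
    constructor
    · rintro ⟨η, h1, rfl⟩; exact ⟨η, h1, rfl⟩
    · rintro ⟨η, h1, rfl⟩; exact ⟨η, h1, rfl⟩
  have : sSup (dnSet Gx ξ) ∈ f '' A := by
    rw [himg]
    exact (hAcomp.image hfc).sSup_mem (hAne.image f)
  obtain ⟨η, hη1, hη2⟩ := this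
  exact ⟨η, hη1, hη2.symm⟩

lemma dualNorm_smul (hcont : Continuous Gx) (hc₁ : 0 < c₁)
    (hlow : ∀ η, c₁ * ‖η‖ ≤ Gx η) (hne : ∃ η, Gx η = 1) {r : ℝ} (hr : 0 ≤ r)
    (ξ : Fin n → ℂ) : dualNorm Gx (r • ξ) = r * dualNorm Gx ξ := by
  obtain ⟨η₀, hη₀, hmax⟩ := exists_maximizer hcont hc₁ hlow hne ξ
  apply le_antisymm
  · refine dualNorm_le hne fun η hη => ?_
    have h1 : (cpair η (r • ξ)).re = r * (cpair η ξ).re := by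
      rw [cpair_smul_right]; simp
    rw [h1]
    exact mul_le_mul_of_nonneg_left (le_dualNorm hc₁ hlow hη ξ) hr
  · have h1 : (cpair η₀ (r • ξ)).re = r * (cpair η₀ ξ).re := by
      rw [cpair_smul_right]; simp
    calc r * dualNorm Gx ξ = (cpair η₀ (r • ξ)).re := by rw [h1, hmax]
      _ ≤ dualNorm Gx (r • ξ) := le_dualNorm hc₁ hlow hη₀ _

lemma dualNorm_lower (hcont : Continuous Gx) (hc₁ : 0 < c₁) (hC₁ : 0 < C₁)
    (hlow : ∀ η, c₁ * ‖η‖ ≤ Gx η) (hup : ∀ η, Gx η ≤ C₁ * ‖η‖)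
    (hhom : IsComplexHomogeneous Gx) (hne : ∃ η, Gx η = 1) (ξ : Fin n → ℂ) :
    ‖ξ‖ / C₁ ≤ dualNorm Gx ξ := by
  rcases eq_or_ne ξ 0 with rfl | hξ
  · obtain ⟨η, hη⟩ := hne
    have : (cpair η 0).re ≤ dualNorm Gx 0 := le_dualNorm hc₁ hlow hη 0
    simpa [cpair] using this
  · set η₀ : Fin n → ℂ := fun i => starRingEnd ℂ (ξ i) with hη₀def
    have hη₀ne : η₀ ≠ 0 := by
      intro h
      apply hξ
      funext i
      have h2 := congrFun h i
      simp only [hη₀def, Pi.zero_apply, map_eq_zero] at h2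
      simp [h2]
    have hG₀ : 0 < Gx η₀ := by
      have := hlow η₀
      have h2 : 0 < ‖η₀‖ := norm_pos_iff.mpr hη₀ne
      nlinarith
    set η : Fin n → ℂ := (Gx η₀)⁻¹ • η₀ with hηdef
    have hGη : Gx η = 1 := by
      rw [hηdef, real_smul_eq, hhom]
      rw [Complex.ofReal_inv, norm_inv, Complex.norm_real, Real.norm_eq_abs, abs_of_pos hG₀]
      exact inv_mul_cancel₀ hG₀.ne'
    have hpair : (cpair η₀ ξ).re = ∑ i, Complex.normSq (ξ i) := by
      simp [cpair, hη₀def, ← Complex.normSq_eq_conj_mul_self]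
    -- lower bound on the sum
    obtain ⟨i₀, hi₀⟩ : ∃ i₀, ‖ξ‖ = ‖ξ i₀‖ := by
      have hnon : (Finset.univ : Finset (Fin n)).Nonempty := by
        by_contra h
        apply hξ
        funext i
        exact absurd (Finset.mem_univ i) (by simp [Finset.not_nonempty_iff_eq_empty.mp h] at *)
      obtain ⟨i₀, hmem, hi₀⟩ := Finset.exists_mem_eq_sup Finset.univ hnon fun i => ‖ξ i‖₊
      have h5 : ‖ξ‖₊ = Finset.univ.sup fun i => ‖ξ i‖₊ := Pi.nnnorm_def ξ
      exact ⟨i₀, congrArg NNReal.toReal (h5.trans hi₀)⟩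
    have hsum : ‖ξ‖ ^ 2 ≤ ∑ i, Complex.normSq (ξ i) := by
      have h1 : Complex.normSq (ξ i₀) ≤ ∑ i, Complex.normSq (ξ i) :=
        Finset.single_le_sum (fun i _ => Complex.normSq_nonneg _) (Finset.mem_univ i₀)
      have h2 : ‖ξ‖ ^ 2 = Complex.normSq (ξ i₀) := by
        rw [hi₀, Complex.sq_norm]
      linarith
    have hnorm₀ : ‖η₀‖ ≤ ‖ξ‖ := by
      refine (pi_norm_le_iff_of_nonneg (norm_nonneg ξ)).mpr fun i => ?_
      simpa [hη₀def] using norm_le_pi_norm ξ i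
    have hGup : Gx η₀ ≤ C₁ * ‖ξ‖ := le_trans (hup η₀) (by gcongr)
    have key : ‖ξ‖ / C₁ ≤ (cpair η ξ).re := by
      have h1 : (cpair η ξ).re = (Gx η₀)⁻¹ * (cpair η₀ ξ).re := by
        rw [hηdef, cpair_smul_left]; simp
      rw [h1, hpair]
      rw [div_le_iff₀ hC₁, ← sub_nonneg]
      have hξpos : 0 < ‖ξ‖ := norm_pos_iff.mpr hξ
      have h3 : ‖ξ‖ ^ 2 / (Gx η₀) ≤ (Gx η₀)⁻¹ * ∑ i, Complex.normSq (ξ i) := by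
        rw [div_eq_inv_mul]
        exact mul_le_mul_of_nonneg_left hsum (by positivity)
      have h4 : ‖ξ‖ ≤ ‖ξ‖ ^ 2 / (Gx η₀) * C₁ := by
        rw [div_mul_eq_mul_div, le_div_iff₀ hG₀]
        calc ‖ξ‖ * Gx η₀ ≤ ‖ξ‖ * (C₁ * ‖ξ‖) := by gcongr
          _ = ‖ξ‖ ^ 2 * C₁ := by ring
      nlinarith
    exact le_trans key (le_dualNorm hc₁ hlow hGη ξ)

lemma dualNorm_upper (hc₁ : 0 < c₁) (hlow : ∀ η, c₁ * ‖η‖ ≤ Gx η)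
    (hne : ∃ η, Gx η = 1) (ξ : Fin n → ℂ) :
    dualNorm Gx ξ ≤ n * c₁⁻¹ * ‖ξ‖ := by
  refine dualNorm_le hne fun η hη => ?_
  have hηn : ‖η‖ ≤ c₁⁻¹ := by
    refine le_of_mul_le_mul_left ?_ hc₁
    rw [mul_inv_cancel₀ hc₁.ne']
    simpa [hη] using hlow η
  calc (cpair η ξ).re ≤ n * ‖η‖ * ‖ξ‖ := re_cpair_le η ξ
    _ ≤ n * c₁⁻¹ * ‖ξ‖ := by gcongr
end dual

section more
variable {n : ℕ} {Gx : (Fin n → ℂ) → ℝ}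

lemma cpair_add_left (η η' ξ : Fin n → ℂ) :
    cpair (η + η') ξ = cpair η ξ + cpair η' ξ := by
  simp [cpair, add_mul, Finset.sum_add_distrib]

lemma hom_zero (hhom : IsComplexHomogeneous Gx) : Gx 0 = 0 := by
  have := hhom 0 0
  simpa using this

lemma exists_unit_of_dualNorm_ne_zero {ξ : Fin n → ℂ} (h : dualNorm Gx ξ ≠ 0) :
    ∃ η, Gx η = 1 := by
  by_contra hno
  push_neg at hno
  apply h
  have : dnSet Gx ξ = ∅ := by
    rw [Set.eq_empty_iff_forall_notMem]
    rintro r ⟨η, hη, -⟩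
    exact hno η hη
  rw [dualNorm_eq, this, Real.sSup_empty]

lemma uniform_bounds {m : ℕ} (U : Set (Fin m → ℂ)) (hU : IsOpen U)
    (G : (Fin m → ℂ) × (Fin n → ℂ) → ℝ)
    (hGcont : ContinuousOn G (U ×ˢ (Set.univ : Set (Fin n → ℂ))))
    (hGpos : ∀ x ∈ U, IsPositiveFn fun η => G (x, η))
    (hGhom : ∀ x ∈ U, IsComplexHomogeneous fun η => G (x, η))
    (K : Set (Fin m → ℂ)) (hK : IsCompact K) (hKU : K ⊆ U) :
    ∃ c₁ > (0:ℝ), ∃ C₁ > (0:ℝ), ∀ x ∈ K, ∀ η : Fin n → ℂ,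
      c₁ * ‖η‖ ≤ G (x, η) ∧ G (x, η) ≤ C₁ * ‖η‖ := by
  have hzero : ∀ x ∈ U, G (x, 0) = 0 := fun x hx => hom_zero (hGhom x hx)
  by_cases hdeg : ∀ η : Fin n → ℂ, η = 0
  · refine ⟨1, one_pos, 1, one_pos, fun x hx η => ?_⟩
    rw [hdeg η]
    simp [hzero x (hKU hx)]
  by_cases hKne : K.Nonempty
  swap
  · refine ⟨1, one_pos, 1, one_pos, fun x hx η => absurd ⟨x, hx⟩ hKne⟩
  push_neg at hdeg
  obtain ⟨η₁, hη₁⟩ := hdeg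
  set T := K ×ˢ Metric.sphere (0 : Fin n → ℂ) 1 with hT
  have hTcomp : IsCompact T := hK.prod (isCompact_sphere 0 1)
  have hTne : T.Nonempty := by
    refine ⟨(hKne.choose, ‖η₁‖⁻¹ • η₁), hKne.choose_spec, ?_⟩
    simp only [Metric.mem_sphere, dist_zero_right, norm_smul, norm_inv, norm_norm]
    rw [inv_mul_cancel₀ (norm_ne_zero_iff.mpr hη₁)]
  have hTsub : T ⊆ U ×ˢ (Set.univ : Set (Fin n → ℂ)) := by
    rintro ⟨x, η⟩ ⟨hx, -⟩
    exact ⟨hKU hx, trivial⟩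
  have hcontT : ContinuousOn G T := hGcont.mono hTsub
  obtain ⟨p, hpT, hpmin⟩ := hTcomp.exists_isMinOn hTne hcontT
  obtain ⟨q, hqT, hqmax⟩ := hTcomp.exists_isMaxOn hTne hcontT
  have hp2 : p.2 ≠ 0 := by
    have : ‖p.2‖ = 1 := by simpa [dist_zero_right] using hpT.2
    intro h; rw [h] at this; simp at this
  have hc₁pos : 0 < G p := by
    have := hGpos p.1 (hKU hpT.1) p.2 hp2
    simpa using this
  have hC₁pos : 0 < G q := lt_of_lt_of_le hc₁pos (hpmin hqT)
  refine ⟨G p, hc₁pos, G q, hC₁pos, fun x hx η => ?_⟩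
  rcases eq_or_ne η 0 with rfl | hη
  · simp [hzero x (hKU hx)]
  · have hnpos : 0 < ‖η‖ := norm_pos_iff.mpr hη
    set u : Fin n → ℂ := ‖η‖⁻¹ • η with hu
    have huS : u ∈ Metric.sphere (0 : Fin n → ℂ) 1 := by
      simp only [Metric.mem_sphere, dist_zero_right, hu, norm_smul, norm_inv, norm_norm]
      rw [inv_mul_cancel₀ hnpos.ne']
    have hηu : η = ‖η‖ • u := by
      rw [hu, smul_smul, mul_inv_cancel₀ hnpos.ne', one_smul]
    have hGval : G (x, η) = ‖η‖ * G (x, u) := by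
      conv_lhs => rw [hηu]
      rw [real_smul_eq]
      have := hGhom x (hKU hx) ((‖η‖ : ℂ)) u
      simpa [abs_of_pos hnpos] using this
    have hmin : G p ≤ G (x, u) := hpmin (⟨hx, huS⟩ : (x, u) ∈ T)
    have hmax : G (x, u) ≤ G q := hqmax (⟨hx, huS⟩ : (x, u) ∈ T)
    constructor
    · rw [hGval]
      nlinarith
    · rw [hGval]
      nlinarith
end more


lemma Filter.Tendsto.cpair_re {n : ℕ} {α : Type*} {l : Filter α} {a b : α → Fin n → ℂ}
    {A B : Fin n → ℂ} (ha : Filter.Tendsto a l (𝓝 A)) (hb : Filter.Tendsto b l (𝓝 B)) :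
    Filter.Tendsto (fun k => (cpair (a k) (b k)).re) l (𝓝 ((cpair A B).re)) := by
  have h : ∀ i : Fin n, Filter.Tendsto (fun k => a k i * b k i) l (𝓝 (A i * B i)) := fun i =>
    (((continuous_apply i).tendsto A).comp ha).mul (((continuous_apply i).tendsto B).comp hb)
  have h2 : Filter.Tendsto (fun k => ∑ i, a k i * b k i) l (𝓝 (∑ i, A i * B i)) :=
    tendsto_finset_sum _ fun i _ => h i
  exact (Complex.continuous_re.tendsto _).comp h2


set_option maxHeartbeats 2000000 in
/-- **Uniform smoothness of the dual metric on compacts (Claim 2 (2) in the proof of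
Royden's criterion).**  If `G : U × ℂⁿ → ℝ` is continuous and each `G (x, ·)` is positive,
convex, complex homogeneous and strictly convex, then the dual metric `F` satisfies: for
every `ε > 0` and compact `K ⊆ U` there is `δ > 0` such that for `x ∈ K` and `ξ₁, ξ₂`
with `F (x, ξ₂) ≤ F (x, ξ₁) = 1` and `F (x, ξ₁ − ξ₂) < δ`, one has
`F (x, ξ₁ + ξ₂) ≥ F (x, ξ₁) + F (x, ξ₂) − ε·F (x, ξ₁ − ξ₂)`. -/
theorem royden_uniform_smoothness {m n : ℕ} (U : Set (Fin m → ℂ)) (hU : IsOpen U)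
    (G : (Fin m → ℂ) × (Fin n → ℂ) → ℝ)
    (hGcont : ContinuousOn G (U ×ˢ (Set.univ : Set (Fin n → ℂ))))
    (hGpos : ∀ x ∈ U, IsPositiveFn fun η => G (x, η))
    (hGconv : ∀ x ∈ U, IsConvexFn fun η => G (x, η))
    (hGhom : ∀ x ∈ U, IsComplexHomogeneous fun η => G (x, η))
    (hGsc : ∀ x ∈ U, IsStrictlyConvexFn fun η => G (x, η)) :
    ∀ ε > 0, ∀ K : Set (Fin m → ℂ), IsCompact K → K ⊆ U →
      ∃ δ > 0, ∀ x ∈ K, ∀ ξ₁ ξ₂ : Fin n → ℂ,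
        dualMetric G x ξ₂ ≤ dualMetric G x ξ₁ → dualMetric G x ξ₁ = 1 →
        dualMetric G x (ξ₁ - ξ₂) < δ →
        dualMetric G x ξ₁ + dualMetric G x ξ₂ - ε * dualMetric G x (ξ₁ - ξ₂) ≤
          dualMetric G x (ξ₁ + ξ₂) := by
  intro ε hε K hK hKU
  obtain ⟨c₁, hc₁, C₁, hC₁, hbd⟩ := uniform_bounds U hU G hGcont hGpos hGhom K hK hKU
  by_contra hcon
  push_neg at hcon
  simp only [dualMetric] at hcon
  have hseq : ∀ k : ℕ, ∃ x ∈ K, ∃ ξ₁ ξ₂ : Fin n → ℂ,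
      dualNorm (fun η => G (x, η)) ξ₂ ≤ dualNorm (fun η => G (x, η)) ξ₁ ∧
      dualNorm (fun η => G (x, η)) ξ₁ = 1 ∧
      dualNorm (fun η => G (x, η)) (ξ₁ - ξ₂) < 1 / (k + 1) ∧
      dualNorm (fun η => G (x, η)) (ξ₁ + ξ₂) <
        dualNorm (fun η => G (x, η)) ξ₁ + dualNorm (fun η => G (x, η)) ξ₂ -
          ε * dualNorm (fun η => G (x, η)) (ξ₁ - ξ₂) := by
    intro k
    obtain ⟨x, hx, ξ₁, ξ₂, h₁, h₂, h₃, h₄⟩ := hcon (1 / (k + 1)) (by positivity)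
    exact ⟨x, hx, ξ₁, ξ₂, h₁, h₂, h₃, h₄⟩
  choose x hxK ξ₁ ξ₂ hle h1 hsmall hviol using hseq
  have hxU : ∀ k, x k ∈ U := fun k => hKU (hxK k)
  have hlow : ∀ k η, c₁ * ‖η‖ ≤ G (x k, η) := fun k η => (hbd _ (hxK k) η).1
  have hup : ∀ k η, G (x k, η) ≤ C₁ * ‖η‖ := fun k η => (hbd _ (hxK k) η).2
  have hcontk : ∀ k, Continuous fun η => G (x k, η) := by
    intro k
    rw [continuous_iff_continuousAt]
    intro η
    exact (hGcont.continuousAt ((hU.prod isOpen_univ).mem_nhds ⟨hxU k, trivial⟩)).comp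
      ((continuous_const.prodMk continuous_id).continuousAt)
  have hne : ∀ k, ∃ η, G (x k, η) = 1 := fun k =>
    exists_unit_of_dualNorm_ne_zero (by rw [h1 k]; exact one_ne_zero)
  set t : ℕ → ℝ := fun k => dualNorm (fun η => G (x k, η)) (ξ₁ k - ξ₂ k) with htdef
  set s : ℕ → ℝ := fun k => dualNorm (fun η => G (x k, η)) (ξ₂ k) with hsdef
  have ht0 : ∀ k, 0 ≤ t k := fun k =>
    le_trans (by positivity) (dualNorm_lower (hcontk k) hc₁ hC₁ (hlow k) (hup k)
      (hGhom _ (hxU k)) (hne k) (ξ₁ k - ξ₂ k))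
  have htpos : ∀ k, 0 < t k := by
    intro k
    rcases (ht0 k).lt_or_eq with h | h
    · exact h
    exfalso
    have hlb := dualNorm_lower (hcontk k) hc₁ hC₁ (hlow k) (hup k)
      (hGhom _ (hxU k)) (hne k) (ξ₁ k - ξ₂ k)
    have h' : dualNorm (fun η => G (x k, η)) (ξ₁ k - ξ₂ k) = 0 := h.symm
    have hd0 : ξ₁ k - ξ₂ k = 0 := by
      rw [h', div_le_iff₀ hC₁, zero_mul] at hlb
      exact norm_le_zero_iff.mp hlb
    have hξeq : ξ₂ k = ξ₁ k := (sub_eq_zero.mp hd0).symm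
    have hdouble : dualNorm (fun η => G (x k, η)) (ξ₁ k + ξ₁ k) = 2 := by
      have h2 : ξ₁ k + ξ₁ k = (2 : ℝ) • ξ₁ k := (two_smul ℝ (ξ₁ k)).symm
      rw [h2, dualNorm_smul (hcontk k) hc₁ (hlow k) (hne k) (by norm_num : (0:ℝ) ≤ 2), h1 k]
      ring
    have hv := hviol k
    rw [h', hξeq, h1 k, hdouble] at hv
    linarith
  have hmax1 := fun k => exists_maximizer (hcontk k) hc₁ (hlow k) (hne k) (ξ₁ k)
  choose η hηG hηval using hmax1
  have hmax2 := fun k => exists_maximizer (hcontk k) hc₁ (hlow k) (hne k) (ξ₂ k)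
  choose η' hη'G hη'val using hmax2
  set v : ℕ → (Fin n → ℂ) := fun k => (t k)⁻¹ • (ξ₁ k - ξ₂ k) with hvdef
  have hFv : ∀ k, dualNorm (fun η => G (x k, η)) (v k) = 1 := by
    intro k
    rw [hvdef]
    rw [dualNorm_smul (hcontk k) hc₁ (hlow k) (hne k) (inv_nonneg.mpr (ht0 k))]
    exact inv_mul_cancel₀ (htpos k).ne'
  -- norm bounds
  have hξ₁b : ∀ k, ‖ξ₁ k‖ ≤ C₁ := by
    intro k
    have := dualNorm_lower (hcontk k) hc₁ hC₁ (hlow k) (hup k) (hGhom _ (hxU k)) (hne k) (ξ₁ k)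
    rw [h1 k] at this
    exact (div_le_one hC₁).mp this
  have hξ₂b : ∀ k, ‖ξ₂ k‖ ≤ C₁ := by
    intro k
    have h2 := dualNorm_lower (hcontk k) hc₁ hC₁ (hlow k) (hup k) (hGhom _ (hxU k)) (hne k) (ξ₂ k)
    have h3 : s k ≤ 1 := (hle k).trans_eq (h1 k)
    have : ‖ξ₂ k‖ / C₁ ≤ 1 := h2.trans h3
    exact (div_le_one hC₁).mp this
  have hvb : ∀ k, ‖v k‖ ≤ C₁ := by
    intro k
    have h2 := dualNorm_lower (hcontk k) hc₁ hC₁ (hlow k) (hup k) (hGhom _ (hxU k)) (hne k) (v k)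
    rw [hFv k] at h2
    exact (div_le_one hC₁).mp h2
  have hηb : ∀ k, ‖η k‖ ≤ c₁⁻¹ := by
    intro k
    refine le_of_mul_le_mul_left ?_ hc₁
    rw [mul_inv_cancel₀ hc₁.ne']
    calc c₁ * ‖η k‖ ≤ G (x k, η k) := hlow k (η k)
      _ = 1 := hηG k
  have hη'b : ∀ k, ‖η' k‖ ≤ c₁⁻¹ := by
    intro k
    refine le_of_mul_le_mul_left ?_ hc₁
    rw [mul_inv_cancel₀ hc₁.ne']
    calc c₁ * ‖η' k‖ ≤ G (x k, η' k) := hlow k (η' k)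
      _ = 1 := hη'G k
  -- key per-k identities and inequalities
  have hA : ∀ k, (cpair (η k) (ξ₁ k)).re = 1 := by
    intro k; rw [← hηval k]; exact h1 k
  have hB : ∀ k, (cpair (η' k) (ξ₂ k)).re = s k := fun k => (hη'val k).symm
  have hsum1 : ∀ k, 1 + (cpair (η k) (ξ₂ k)).re ≤
      dualNorm (fun η => G (x k, η)) (ξ₁ k + ξ₂ k) := by
    intro k
    have h2 := le_dualNorm hc₁ (hlow k) (hηG k) (ξ₁ k + ξ₂ k)
    rw [cpair_add_right, Complex.add_re, hA k] at h2
    exact h2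
  have hsum2 : ∀ k, (cpair (η' k) (ξ₁ k)).re + s k ≤
      dualNorm (fun η => G (x k, η)) (ξ₁ k + ξ₂ k) := by
    intro k
    have h2 := le_dualNorm hc₁ (hlow k) (hη'G k) (ξ₁ k + ξ₂ k)
    rw [cpair_add_right, Complex.add_re, hB k] at h2
    exact h2
  have h2a : ∀ k, (cpair (η k) (ξ₂ k)).re < s k - ε * t k := by
    intro k
    have hv := hviol k
    rw [h1 k] at hv
    linarith [hsum1 k]
  have h2b : ∀ k, (cpair (η' k) (ξ₁ k)).re < 1 - ε * t k := by
    intro k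
    have hv := hviol k
    rw [h1 k] at hv
    linarith [hsum2 k]
  have hkey : ∀ k, 2 * ε < (cpair (η k - η' k) (v k)).re := by
    intro k
    have e1 : (cpair (η k) (ξ₁ k - ξ₂ k)).re = 1 - (cpair (η k) (ξ₂ k)).re := by
      rw [cpair_sub_right, Complex.sub_re, hA k]
    have e2 : (cpair (η' k) (ξ₁ k - ξ₂ k)).re = (cpair (η' k) (ξ₁ k)).re - s k := by
      rw [cpair_sub_right, Complex.sub_re, hB k]
    have e3 : (cpair (η k - η' k) (v k)).re =
        (t k)⁻¹ * ((cpair (η k) (ξ₁ k - ξ₂ k)).re - (cpair (η' k) (ξ₁ k - ξ₂ k)).re) := by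
      rw [hvdef]
      show (cpair (η k - η' k) ((t k)⁻¹ • (ξ₁ k - ξ₂ k))).re = _
      rw [cpair_smul_right, cpair_sub_left]
      simp [Complex.sub_re]
    have hnum : 2 * ε * t k <
        (cpair (η k) (ξ₁ k - ξ₂ k)).re - (cpair (η' k) (ξ₁ k - ξ₂ k)).re := by
      rw [e1, e2]
      linarith [h2a k, h2b k]
    rw [e3]
    have hlt := mul_lt_mul_of_pos_left hnum (inv_pos.mpr (htpos k))
    have heq : (t k)⁻¹ * (2 * ε * t k) = 2 * ε := by
      rw [mul_comm (2 * ε) (t k), ← mul_assoc, inv_mul_cancel₀ (htpos k).ne', one_mul]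
    rw [heq] at hlt
    exact hlt
  have hs_lb : ∀ k, 1 - t k ≤ s k := by
    intro k
    have hb1 : (cpair (η k) (ξ₂ k)).re ≤ s k := le_dualNorm hc₁ (hlow k) (hηG k) (ξ₂ k)
    have hb2 : (cpair (η k) (ξ₁ k - ξ₂ k)).re ≤ t k :=
      le_dualNorm hc₁ (hlow k) (hηG k) (ξ₁ k - ξ₂ k)
    rw [cpair_sub_right, Complex.sub_re, hA k] at hb2
    linarith
  have hs_ub : ∀ k, s k ≤ 1 := fun k => (hle k).trans_eq (h1 k)
  -- comPACTNESS part
  set Q : Set ((Fin m → ℂ) × ((Fin n → ℂ) × ((Fin n → ℂ) × ((Fin n → ℂ) × (Fin n → ℂ))))) :=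
    K ×ˢ ((Metric.closedBall (0 : Fin n → ℂ) C₁) ×ˢ ((Metric.closedBall (0 : Fin n → ℂ) c₁⁻¹) ×ˢ
      ((Metric.closedBall (0 : Fin n → ℂ) c₁⁻¹) ×ˢ (Metric.closedBall (0 : Fin n → ℂ) C₁)))) with hQdef
  have hQc : IsCompact Q :=
    hK.prod ((isCompact_closedBall _ _).prod ((isCompact_closedBall _ _).prod
      ((isCompact_closedBall _ _).prod (isCompact_closedBall _ _))))
  have hPQ : ∀ k, (x k, ξ₁ k, η k, η' k, v k) ∈ Q := by
    intro k
    refine ⟨hxK k, ?_, ?_, ?_, ?_⟩ <;>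
      simp only [Metric.mem_closedBall, dist_zero_right]
    · exact hξ₁b k
    · exact hηb k
    · exact hη'b k
    · exact hvb k
  obtain ⟨⟨xL, ξL, ηa, ηb, vL⟩, hLQ, φ, hφmono, hφtend⟩ := hQc.tendsto_subseq hPQ
  have hxLK : xL ∈ K := hLQ.1
  have hxLU : xL ∈ U := hKU hxLK
  -- component limits
  have hxt : Tendsto (fun k => x (φ k)) atTop (𝓝 xL) :=
    (continuous_fst.tendsto _).comp hφtend
  have hξt : Tendsto (fun k => ξ₁ (φ k)) atTop (𝓝 ξL) :=
    ((continuous_fst.comp continuous_snd).tendsto _).comp hφtend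
  have hηt : Tendsto (fun k => η (φ k)) atTop (𝓝 ηa) :=
    ((continuous_fst.comp (continuous_snd.comp continuous_snd)).tendsto _).comp hφtend
  have hη't : Tendsto (fun k => η' (φ k)) atTop (𝓝 ηb) :=
    ((continuous_fst.comp (continuous_snd.comp (continuous_snd.comp continuous_snd))).tendsto _).comp hφtend
  have hvt : Tendsto (fun k => v (φ k)) atTop (𝓝 vL) :=
    ((continuous_snd.comp (continuous_snd.comp (continuous_snd.comp continuous_snd))).tendsto _).comp hφtend
  -- t tends to zero
  have htt : Tendsto (fun k => t (φ k)) atTop (𝓝 0) := by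
    refine squeeze_zero (fun k => ht0 (φ k)) (fun k => ?_) tendsto_one_div_add_atTop_nhds_zero_nat
    have h2 : t (φ k) < 1 / (φ k + 1) := hsmall (φ k)
    have h3 : (1 : ℝ) / (φ k + 1) ≤ 1 / (k + 1) := by
      have : (k : ℝ) + 1 ≤ (φ k : ℝ) + 1 := by
        have h4 : k ≤ φ k := hφmono.le_apply
        have h5 : (k:ℝ) ≤ (φ k : ℝ) := Nat.cast_le.mpr h4
        linarith
      apply one_div_le_one_div_of_le (by positivity) this
    linarith
  -- s tends to one
  have hst : Tendsto (fun k => s (φ k)) atTop (𝓝 1) := by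
    have hlo : Tendsto (fun k => 1 - t (φ k)) atTop (𝓝 1) := by
      have h6 := Filter.Tendsto.sub
        (tendsto_const_nhds : Tendsto (fun _ : ℕ => (1:ℝ)) atTop (𝓝 1)) htt
      simpa using h6
    exact tendsto_of_tendsto_of_tendsto_of_le_of_le hlo tendsto_const_nhds
      (fun k => hs_lb (φ k)) (fun k => hs_ub (φ k))
  -- ξ₂ tends to ξL
  have hξ₂eq : ∀ k, ξ₂ k = ξ₁ k - t k • v k := by
    intro k
    have : t k • v k = ξ₁ k - ξ₂ k := by
      show t k • ((t k)⁻¹ • (ξ₁ k - ξ₂ k)) = _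
      rw [smul_smul, mul_inv_cancel₀ (htpos k).ne', one_smul]
    rw [this, sub_sub_cancel]
  have hxi2t : Tendsto (fun k => ξ₂ (φ k)) atTop (𝓝 ξL) := by
    have h2 : Tendsto (fun k => ξ₁ (φ k) - t (φ k) • v (φ k)) atTop (𝓝 (ξL - (0:ℝ) • vL)) :=
      hξt.sub (htt.smul hvt)
    have h3 : ξL - (0:ℝ) • vL = ξL := by simp
    rw [h3] at h2
    exact h2.congr (fun k => (hξ₂eq (φ k)).symm)
  -- continuity tools at the limit
  have hGatL : ∀ ζ : Fin n → ℂ, ContinuousAt G (xL, ζ) := fun ζ =>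
    hGcont.continuousAt ((hU.prod isOpen_univ).mem_nhds ⟨hxLU, trivial⟩)
  -- limit identities
  have hGa : G (xL, ηa) = 1 := by
    have hT : Tendsto (fun k => G (x (φ k), η (φ k))) atTop (𝓝 (G (xL, ηa))) :=
      ((hGatL ηa).tendsto).comp (hxt.prodMk_nhds hηt)
    have hT2 : Tendsto (fun k => G (x (φ k), η (φ k))) atTop (𝓝 1) := by
      simp only [hηG]
      exact tendsto_const_nhds
    exact tendsto_nhds_unique hT hT2
  have hGb : G (xL, ηb) = 1 := by
    have hT : Tendsto (fun k => G (x (φ k), η' (φ k))) atTop (𝓝 (G (xL, ηb))) :=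
      ((hGatL ηb).tendsto).comp (hxt.prodMk_nhds hη't)
    have hT2 : Tendsto (fun k => G (x (φ k), η' (φ k))) atTop (𝓝 1) := by
      simp only [hη'G]
      exact tendsto_const_nhds
    exact tendsto_nhds_unique hT hT2
  have hre_a : (cpair ηa ξL).re = 1 := by
    have hT : Tendsto (fun k => (cpair (η (φ k)) (ξ₁ (φ k))).re) atTop
        (𝓝 ((cpair ηa ξL).re)) := hηt.cpair_re hξt
    have hT2 : Tendsto (fun k => (cpair (η (φ k)) (ξ₁ (φ k))).re) atTop (𝓝 1) := by
      simp only [hA]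
      exact tendsto_const_nhds
    exact tendsto_nhds_unique hT hT2
  have hre_b : (cpair ηb ξL).re = 1 := by
    have hT : Tendsto (fun k => (cpair (η' (φ k)) (ξ₂ (φ k))).re) atTop
        (𝓝 ((cpair ηb ξL).re)) := hη't.cpair_re hxi2t
    have hT2 : Tendsto (fun k => (cpair (η' (φ k)) (ξ₂ (φ k))).re) atTop (𝓝 1) :=
      hst.congr (fun k => (hB (φ k)).symm)
    exact tendsto_nhds_unique hT hT2
  have hv2ε : 2 * ε ≤ (cpair (ηa - ηb) vL).re := by
    have hT : Tendsto (fun k => (cpair (η (φ k) - η' (φ k)) (v (φ k))).re) atTop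
        (𝓝 ((cpair (ηa - ηb) vL).re)) := (hηt.sub hη't).cpair_re hvt
    exact ge_of_tendsto hT (Filter.Eventually.of_forall fun k => (hkey (φ k)).le)
  -- facts at the limit point
  have hlowL : ∀ ζ : Fin n → ℂ, c₁ * ‖ζ‖ ≤ G (xL, ζ) := fun ζ => (hbd _ hxLK ζ).1
  have hneL : ∃ ζ : Fin n → ℂ, G (xL, ζ) = 1 := ⟨ηa, hGa⟩
  have hFle : dualNorm (fun ζ => G (xL, ζ)) ξL ≤ 1 := by
    refine dualNorm_le hneL fun ζ hζ => ?_
    have hζ0 : ζ ≠ 0 := by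
      intro h0
      rw [h0] at hζ
      rw [hom_zero (hGhom xL hxLU)] at hζ
      norm_num at hζ
    have hgt : Tendsto (fun k => G (x (φ k), ζ)) atTop (𝓝 1) := by
      have := ((hGatL ζ).tendsto).comp (hxt.prodMk_nhds tendsto_const_nhds)
      rwa [hζ] at this
    have hev : ∀ᶠ k in atTop, 0 < G (x (φ k), ζ) :=
      hgt.eventually (eventually_gt_nhds zero_lt_one)
    have hevle : ∀ᶠ k in atTop, (G (x (φ k), ζ))⁻¹ * (cpair ζ (ξ₁ (φ k))).re ≤ 1 := by
      filter_upwards [hev] with k hk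
      have hunit : G (x (φ k), (G (x (φ k), ζ))⁻¹ • ζ) = 1 := by
        have h3 := hGhom _ (hxU (φ k)) ((G (x (φ k), ζ))⁻¹ : ℝ) ζ
        rw [real_smul_eq]
        rw [show ((((G (x (φ k), ζ))⁻¹ : ℝ)) : ℂ) • ζ = (((G (x (φ k), ζ))⁻¹ : ℝ)) • ζ from
          (real_smul_eq _ ζ).symm]
        calc G (x (φ k), ((G (x (φ k), ζ))⁻¹ : ℝ) • ζ)
            = ‖(((G (x (φ k), ζ))⁻¹ : ℝ) : ℂ)‖ * G (x (φ k), ζ) := by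
              rw [← h3]; rw [real_smul_eq]
          _ = 1 := by
              rw [Complex.norm_real, Real.norm_eq_abs, abs_of_pos (inv_pos.mpr hk)]
              exact inv_mul_cancel₀ hk.ne'
      have hle1 := le_dualNorm hc₁ (hlow (φ k)) hunit (ξ₁ (φ k))
      rw [h1 (φ k)] at hle1
      rw [cpair_smul_left] at hle1
      simpa using hle1
    have hq : Tendsto (fun k => (cpair ζ (ξ₁ (φ k))).re) atTop (𝓝 ((cpair ζ ξL).re)) :=
      (tendsto_const_nhds : Tendsto (fun _ : ℕ => ζ) atTop (𝓝 ζ)).cpair_re hξt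
    have hlim : Tendsto (fun k => (G (x (φ k), ζ))⁻¹ * (cpair ζ (ξ₁ (φ k))).re) atTop
        (𝓝 ((1:ℝ)⁻¹ * (cpair ζ ξL).re)) :=
      (hgt.inv₀ one_ne_zero).mul hq
    have := le_of_tendsto hlim hevle
    simpa using this
  have hFL : dualNorm (fun ζ => G (xL, ζ)) ξL = 1 := by
    refine le_antisymm hFle ?_
    calc (1:ℝ) = (cpair ηa ξL).re := hre_a.symm
      _ ≤ _ := le_dualNorm hc₁ hlowL hGa ξL
  -- uniqueness of the supporting functional
  have hab : ηa = ηb := by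
    by_contra hne'
    have hsum_ne : ηa + ηb ≠ 0 := by
      intro h0
      have h2 : (cpair (ηa + ηb) ξL).re = 2 := by
        rw [cpair_add_left, Complex.add_re, hre_a, hre_b]
        norm_num
      rw [h0, cpair_zero_left] at h2
      simp at h2
    have hg2 : G (xL, ηa + ηb) < 2 := (hGsc xL hxLU).2 ηa ηb hGa hGb hne'
    have hgpos : 0 < G (xL, ηa + ηb) := hGpos xL hxLU _ hsum_ne
    have hunit : G (xL, (G (xL, ηa + ηb))⁻¹ • (ηa + ηb)) = 1 := by
      have h3 := hGhom xL hxLU ((G (xL, ηa + ηb))⁻¹ : ℝ) (ηa + ηb)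
      calc G (xL, ((G (xL, ηa + ηb))⁻¹ : ℝ) • (ηa + ηb))
          = ‖(((G (xL, ηa + ηb))⁻¹ : ℝ) : ℂ)‖ * G (xL, ηa + ηb) := by
            rw [← h3]; rw [real_smul_eq]
        _ = 1 := by
            rw [Complex.norm_real, Real.norm_eq_abs, abs_of_pos (inv_pos.mpr hgpos)]
            exact inv_mul_cancel₀ hgpos.ne'
    have hle' := le_dualNorm hc₁ hlowL hunit ξL
    rw [hFL, cpair_smul_left] at hle'
    have h4 : (G (xL, ηa + ηb))⁻¹ * 2 ≤ 1 := by
      have h5 : (cpair (ηa + ηb) ξL).re = 2 := by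
        rw [cpair_add_left, Complex.add_re, hre_a, hre_b]
        norm_num
      have h6 : ((((G (xL, ηa + ηb))⁻¹ : ℝ) : ℂ) * cpair (ηa + ηb) ξL).re
          = (G (xL, ηa + ηb))⁻¹ * (cpair (ηa + ηb) ξL).re := by
        simp
      rw [h6, h5] at hle'
      exact hle'
    have h7 := mul_le_mul_of_nonneg_left h4 hgpos.le
    rw [← mul_assoc, mul_inv_cancel₀ hgpos.ne', one_mul, mul_one] at h7
    linarith
  -- final contradiction
  rw [hab, sub_self, cpair_zero_left] at hv2ε
  simp only [Complex.zero_re] at hv2ε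
  linarith
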